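/- Let J be a feasible set of jobs and S its earliest-deadline schedule. Then every block of S, i.e., every maximal interval [s,t) of consecutive busy time units, satisfies: s = r_i for some job i ∈ J executed in the block; every job executed within the block has release time at least s; and t − s = a·p, where a is the number of jobs executed within the block (each of which is completed within the block). -/
import Mathlib


open Finset

/-- `S` is a (preemptive) schedule: each job is executed only at integer time
units inside its window `[r_j, d_j)`, and at most one job is executed at a time. -/
def IsSchedule (n : ℕ) (r d : Fin n → ℤ) (S : Fin n → Finset ℤ) : Prop :=
  (∀ j, ∀ t ∈ S j, r j ≤ t ∧ t < d j) ∧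
  (∀ i j : Fin n, i ≠ j → Disjoint (S i) (S j))

/-- `S` is a full schedule of the job set `J` (it completes every job of `J` and
executes no other job) using only time units in `[x, y)`. -/
def IsFullScheduleIn (n : ℕ) (r d : Fin n → ℤ) (p : ℕ)
    (J : Finset (Fin n)) (S : Fin n → Finset ℤ) (x y : ℤ) : Prop :=
  IsSchedule n r d S ∧
  (∀ j ∈ J, (S j).card = p) ∧
  (∀ j, j ∉ J → S j = ∅) ∧
  (∀ j, ∀ t ∈ S j, x ≤ t ∧ t < y)

/-- `J` is feasible: some schedule completes every job of `J`. -/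
def Feasible (n : ℕ) (r d : Fin n → ℤ) (p : ℕ) (J : Finset (Fin n)) : Prop :=
  ∃ S : Fin n → Finset ℤ, IsSchedule n r d S ∧ ∀ j ∈ J, (S j).card = p

/-- `J` is `(k, x, y)`-feasible.  Jobs are `0`-indexed (`j : Fin n` is job `j+1`
of the paper), so the paper's `J ⊆ {1, …, k}` reads `∀ j ∈ J, (j : ℕ) < k`. -/
def KFeasible (n : ℕ) (r d : Fin n → ℤ) (p : ℕ) (k : ℕ) (x y : ℤ)
    (J : Finset (Fin n)) : Prop :=
  (∀ j ∈ J, (j : ℕ) < k) ∧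
  (∀ j ∈ J, x ≤ r j ∧ r j < y) ∧
  ∃ S : Fin n → Finset ℤ, IsFullScheduleIn n r d p J S x y

/-- Total weight `w(J)` of a set of jobs. -/
def weight (n : ℕ) (w : Fin n → ℤ) (J : Finset (Fin n)) : ℤ := ∑ j ∈ J, w j

/-- Weighted throughput of a schedule: total weight of the completed jobs. -/
def throughput (n : ℕ) (w : Fin n → ℤ) (p : ℕ) (S : Fin n → Finset ℤ) : ℤ :=
  ∑ j ∈ Finset.univ.filter (fun j => (S j).card = p), w j

/-- `Δ(x, y) = min(n, ⌈(y-x)/p⌉ - 1)`. -/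
def Delta (n p : ℕ) (x y : ℤ) : ℕ :=
  min n (Int.toNat (⌈((y - x : ℤ) : ℚ) / (p : ℚ)⌉ - 1))

/-- `lam x` (the paper's `λ(x)`) is a job whose release time is minimum among
those with release time `≥ x` (whenever such a job exists). -/
def IsLam (n : ℕ) (r : Fin n → ℤ) (lam : ℤ → Fin n) : Prop :=
  ∀ x : ℤ, (∃ i, x ≤ r i) → x ≤ r (lam x) ∧ ∀ i, x ≤ r i → r (lam x) ≤ r i

/-- `lamp x` (the paper's `λ⁺(x)`) is a job whose release time is minimum among
those with release time `> x` (whenever such a job exists). -/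
def IsLamPlus (n : ℕ) (r : Fin n → ℤ) (lamp : ℤ → Fin n) : Prop :=
  ∀ x : ℤ, (∃ i, x < r i) → x < r (lamp x) ∧ ∀ i, x < r i → r (lamp x) ≤ r i

/-- The defining recurrence of the table `F`:
`F^k_{i,j} = 0` if `r_i = r_j`, and otherwise `F^k_{i,j}` is the maximum of
(F1) `F^k_{λ⁺(r_i), j}` and
(F2) `G^k_{i,a} + F^k_{λ(r_i + ap), j}` over `1 ≤ a ≤ n` with `r_i + ap ≤ r_j`. -/
def FRec (n : ℕ) (r : Fin n → ℤ) (p : ℕ) (lam lamp : ℤ → Fin n)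
    (F : ℕ → Fin n → Fin n → ℤ) (G : ℕ → Fin n → ℕ → ℤ) : Prop :=
  (∀ k ≤ n, ∀ i j : Fin n, r i = r j → F k i j = 0) ∧
  (∀ k ≤ n, ∀ i j : Fin n, r i < r j →
    IsGreatest
      (insert (F k (lamp (r i)) j)
        {v : ℤ | ∃ a : ℕ, 1 ≤ a ∧ a ≤ n ∧ r i + (a : ℤ) * (p : ℤ) ≤ r j ∧
          v = G k i a + F k (lam (r i + (a : ℤ) * (p : ℤ))) j})
      (F k i j))

/-- The defining recurrence of the table `G` (the paper's job `k` of table index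
`k` is `⟨k-1, _⟩ : Fin n`; we state the recurrence as `G^{k+1}` vs `G^k`, the
paper's job `k+1` being `⟨k, _⟩ : Fin n`):
`G^k_{i,a} = 0` if `k = 0` or `a = 0`;
`G^k_{i,a} = G^{k-1}_{i,a}` if `r_k ∉ [r_i, r_i + (a-1)p]` or `d_k < r_i + ap`;
otherwise `G^k_{i,a}` is the maximum of
(G1) `G^{k-1}_{i,a}`, (G2) `G^{k-1}_{i,a-1} + w_k`, and
(G3) `H^{k-1}_{i,l} + G^{k-1}_{l, Δ(r_l, r_i + ap)} + w_k` over `l` with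
`r_k < r_l < r_i + ap`. -/
def GRec (n : ℕ) (r d w : Fin n → ℤ) (p : ℕ)
    (F : ℕ → Fin n → Fin n → ℤ) (G : ℕ → Fin n → ℕ → ℤ)
    (H : ℕ → Fin n → Fin n → ℤ) : Prop :=
  (∀ k a : ℕ, ∀ i : Fin n, k = 0 ∨ a = 0 → G k i a = 0) ∧
  (∀ k a : ℕ, ∀ hk : k < n, ∀ i : Fin n, 1 ≤ a → a ≤ n →
    (¬ (r i ≤ r ⟨k, hk⟩ ∧ r ⟨k, hk⟩ ≤ r i + ((a : ℤ) - 1) * (p : ℤ)) ∨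
      d ⟨k, hk⟩ < r i + (a : ℤ) * (p : ℤ)) →
    G (k + 1) i a = G k i a) ∧
  (∀ k a : ℕ, ∀ hk : k < n, ∀ i : Fin n, 1 ≤ a → a ≤ n →
    r i ≤ r ⟨k, hk⟩ → r ⟨k, hk⟩ ≤ r i + ((a : ℤ) - 1) * (p : ℤ) →
    r i + (a : ℤ) * (p : ℤ) ≤ d ⟨k, hk⟩ →
    IsGreatest
      (insert (G k i a) (insert (G k i (a - 1) + w ⟨k, hk⟩)
        {v : ℤ | ∃ l : Fin n, r ⟨k, hk⟩ < r l ∧ r l < r i + (a : ℤ) * (p : ℤ) ∧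
          v = H k i l + G k l (Delta n p (r l) (r i + (a : ℤ) * (p : ℤ))) + w ⟨k, hk⟩}))
      (G (k + 1) i a))

/-- The defining recurrence of the table `H` (defined for `k < n` and
`r_i ≤ r_{k+1} ≤ r_j`; the paper's job `k+1` is `⟨k, _⟩ : Fin n`):
`H^k_{i,j} = 0` if `r_i = r_j`, and otherwise `H^k_{i,j}` is the maximum of
`G^k_{i,a} + F^k_{λ(r_i + ap), j}` over `0 ≤ a ≤ n` with
`r_{k+1} ≤ r_i + ap ≤ r_j`. -/
def HRec (n : ℕ) (r : Fin n → ℤ) (p : ℕ) (lam : ℤ → Fin n)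
    (F : ℕ → Fin n → Fin n → ℤ) (G : ℕ → Fin n → ℕ → ℤ)
    (H : ℕ → Fin n → Fin n → ℤ) : Prop :=
  (∀ k : ℕ, ∀ hk : k < n, ∀ i j : Fin n, r i ≤ r ⟨k, hk⟩ → r ⟨k, hk⟩ ≤ r j →
    r i = r j → H k i j = 0) ∧
  (∀ k : ℕ, ∀ hk : k < n, ∀ i j : Fin n, r i ≤ r ⟨k, hk⟩ → r ⟨k, hk⟩ ≤ r j →
    r i < r j →
    IsGreatest
      {v : ℤ | ∃ a : ℕ, a ≤ n ∧ r ⟨k, hk⟩ ≤ r i + (a : ℤ) * (p : ℤ) ∧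
        r i + (a : ℤ) * (p : ℤ) ≤ r j ∧
        v = G k i a + F k (lam (r i + (a : ℤ) * (p : ℤ))) j}
      (H k i j))

/-- `S` is the earliest-deadline schedule of the job set `J`: it is a schedule
executing only jobs of `J`, giving each job at most `p` units, and whenever a
job `j ∈ J` is available at time `t` (released, not expired, and having
received fewer than `p` units before `t`), some job `k` at least as urgent as
`j` (smaller deadline, ties broken in favor of the smaller index) is executed
at `t`. -/
def IsEDSchedule (n : ℕ) (r d : Fin n → ℤ) (p : ℕ) (J : Finset (Fin n))
    (S : Fin n → Finset ℤ) : Prop :=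
  IsSchedule n r d S ∧
  (∀ j, j ∉ J → S j = ∅) ∧
  (∀ j, (S j).card ≤ p) ∧
  (∀ t : ℤ, ∀ j ∈ J, r j ≤ t → t < d j →
    ((S j).filter (fun u => u < t)).card < p →
    ∃ k ∈ J, t ∈ S k ∧ (d k < d j ∨ (d k = d j ∧ k ≤ j)))

section AuxStmt11

variable {n : ℕ} {r d : Fin n → ℤ} {p : ℕ} {J : Finset (Fin n)} {S : Fin n → Finset ℤ}

lemma exec_unique' (hS : IsSchedule n r d S) {i j : Fin n} {u : ℤ}
    (hi : u ∈ S i) (hj : u ∈ S j) : i = j := by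
  by_contra h
  exact Finset.disjoint_left.mp (hS.2 i j h) hi hj

lemma filter_card_lt {A : Finset ℤ} {P : ℤ → Prop} [DecidablePred P] {u : ℤ}
    (hu : u ∈ A) (hP : ¬ P u) : (A.filter P).card < A.card :=
  Finset.card_lt_card ((Finset.ssubset_iff_of_subset (Finset.filter_subset _ _)).mpr
    ⟨u, hu, by simp [hP]⟩)

/-- The earliest-deadline schedule of a feasible set completes every job. -/
lemma edf_complete (hp : 1 ≤ p)
    (hfeas : Feasible n r d p J) (hed : IsEDSchedule n r d p J S) :
    ∀ j ∈ J, (S j).card = p := by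
  classical
  obtain ⟨hS, hnotJ, hcardle, hED⟩ := hed
  intro j hj
  by_contra hne
  have hlt : (S j).card < p := lt_of_le_of_ne (hcardle j) hne
  set Pri : Fin n → Fin n → Prop := fun a b => d a < d b ∨ (d a = d b ∧ a ≤ b) with hPriDef
  have pri_trans : ∀ a b c, Pri a b → Pri b c → Pri a c := by
    intro a b c hab hbc
    rcases hab with h1 | ⟨h1, h1'⟩ <;> rcases hbc with h2 | ⟨h2, h2'⟩
    · exact Or.inl (h1.trans h2)
    · exact Or.inl (h2 ▸ h1)
    · exact Or.inl (h1 ▸ h2)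
    · exact Or.inr ⟨h1.trans h2, h1'.trans h2'⟩
  set Good : ℤ → Prop :=
    fun x => ∀ v : ℤ, x ≤ v → v < d j → ∃ k, v ∈ S k ∧ k ∈ J ∧ Pri k j with hGoodDef
  have hGood0 : Good (r j) := by
    intro v hv1 hv2
    obtain ⟨k, hkJ, hk, hpri⟩ := hED v j hj hv1 hv2
      (lt_of_le_of_lt (Finset.card_filter_le _ _) hlt)
    exact ⟨k, hk, hkJ, hpri⟩
  have hJne : J.Nonempty := ⟨j, hj⟩
  set R : ℤ := (J.image r).min' (hJne.image r) with hR
  have hRle : ∀ k ∈ J, R ≤ r k := fun k hk =>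
    Finset.min'_le _ _ (Finset.mem_image_of_mem r hk)
  have claimA : ∀ m : ℕ, ∀ x : ℤ, x ≤ r j → Good x → (x - R).toNat ≤ m →
      ∃ x', x' ≤ r j ∧ Good x' ∧ ∀ k u, u ∈ S k → x' ≤ u → u < d j → x' ≤ r k := by
    intro m
    induction m with
    | zero =>
      intro x hxr hGx hm
      by_cases hall : ∀ k u, u ∈ S k → x ≤ u → u < d j → x ≤ r k
      · exact ⟨x, hxr, hGx, hall⟩
      · push_neg at hall
        obtain ⟨k, u, hu, hxu, hud, hrk⟩ := hall
        obtain ⟨k', hk'u, hk'J, hk'pri⟩ := hGx u hxu hud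
        obtain rfl : k' = k := exec_unique' hS hk'u hu
        have hRk : R ≤ r k' := hRle k' hk'J
        exact absurd hRk (by omega)
    | succ m ih =>
      intro x hxr hGx hm
      by_cases hall : ∀ k u, u ∈ S k → x ≤ u → u < d j → x ≤ r k
      · exact ⟨x, hxr, hGx, hall⟩
      · push_neg at hall
        obtain ⟨k, u, hu, hxu, hud, hrk⟩ := hall
        obtain ⟨k', hk'u, hk'J, hk'pri⟩ := hGx u hxu hud
        obtain rfl : k' = k := exec_unique' hS hk'u hu
        have hRk : R ≤ r k' := hRle k' hk'J
        have hGx1 : Good (r k') := by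
          intro v hv1 hv2
          by_cases hvx : x ≤ v
          · exact hGx v hvx hv2
          · push_neg at hvx
            have hudk : u < d k' := (hS.1 k' u hu).2
            have h1 : v < d k' := by omega
            have hcf : ((S k').filter (fun w => w < v)).card < p :=
              lt_of_lt_of_le (filter_card_lt hu (by omega)) (hcardle k')
            obtain ⟨k2, hk2J, hk2, hpri2⟩ := hED v k' hk'J hv1 h1 hcf
            exact ⟨k2, hk2, hk2J, pri_trans k2 k' j hpri2 hk'pri⟩
        exact ih (r k') (by omega) hGx1 (by omega)
  obtain ⟨x', hx'r, hGx', hall'⟩ := claimA (r j - R).toNat (r j) le_rfl hGood0 le_rfl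
  set I : Finset ℤ := Finset.Ico x' (d j) with hI
  set B' : Finset (Fin n) :=
    Finset.univ.filter (fun k => ∃ u ∈ S k, x' ≤ u ∧ u < d j) with hB'
  have hmemB' : ∀ k, k ∈ B' ↔ ∃ u ∈ S k, x' ≤ u ∧ u < d j := by
    intro k; simp [hB']
  have hB'fact : ∀ k ∈ B', k ∈ J ∧ d k ≤ d j ∧ x' ≤ r k := by
    intro k hk
    obtain ⟨u, hu, hxu, hud⟩ := (hmemB' k).mp hk
    obtain ⟨k', hk'u, hk'J, hk'pri⟩ := hGx' u hxu hud
    obtain rfl : k' = k := exec_unique' hS hk'u hu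
    refine ⟨hk'J, ?_, hall' _ u hu hxu hud⟩
    rcases hk'pri with h | ⟨h, _⟩
    · exact h.le
    · exact h.le
  have hIeq : I = B'.biUnion (fun k => S k ∩ I) := by
    ext v
    simp only [Finset.mem_biUnion, Finset.mem_inter]
    constructor
    · intro hv
      have hv1 : x' ≤ v := (Finset.mem_Ico.mp hv).1
      have hv2 : v < d j := (Finset.mem_Ico.mp hv).2
      obtain ⟨k, hk, hkJ, hpri⟩ := hGx' v hv1 hv2
      exact ⟨k, (hmemB' k).mpr ⟨v, hk, hv1, hv2⟩, hk, hv⟩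
    · rintro ⟨k, _, _, hv⟩; exact hv
  have hdisj : ∀ a ∈ B', ∀ b ∈ B', a ≠ b → Disjoint (S a ∩ I) (S b ∩ I) :=
    fun a _ b _ hab =>
      (hS.2 a b hab).mono Finset.inter_subset_left Finset.inter_subset_left
  have hcard1 : I.card = ∑ k ∈ B', (S k ∩ I).card := by
    conv_lhs => rw [hIeq]
    exact Finset.card_biUnion hdisj
  obtain ⟨T, hT, hTcard⟩ := hfeas
  set C := insert j B' with hC
  have hCJ : ∀ k ∈ C, k ∈ J := by
    intro k hk
    rcases Finset.mem_insert.mp hk with rfl | hm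
    · exact hj
    · exact (hB'fact k hm).1
  have hTsub : ∀ k ∈ C, T k ⊆ I := by
    intro k hk v hv
    have h1 := hT.1 k v hv
    rcases Finset.mem_insert.mp hk with rfl | hm
    · exact Finset.mem_Ico.mpr ⟨hx'r.trans h1.1, h1.2⟩
    · obtain ⟨_, hdk, hrk⟩ := hB'fact k hm
      exact Finset.mem_Ico.mpr ⟨hrk.trans h1.1, lt_of_lt_of_le h1.2 hdk⟩
  have hcard2 : C.card * p ≤ I.card := by
    calc C.card * p = ∑ _k ∈ C, p := by simp [Finset.sum_const, mul_comm]
      _ = ∑ k ∈ C, (T k).card :=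
          Finset.sum_congr rfl (fun k hk => (hTcard k (hCJ k hk)).symm)
      _ = (C.biUnion T).card :=
          (Finset.card_biUnion (fun a _ b _ hab => hT.2 a b hab)).symm
      _ ≤ I.card := Finset.card_le_card (by
          intro v hv
          obtain ⟨k, hk, hv'⟩ := Finset.mem_biUnion.mp hv
          exact hTsub k hk hv')
  have hterm : ∀ k ∈ B', (S k ∩ I).card ≤ p := fun k _ =>
    le_trans (Finset.card_le_card Finset.inter_subset_left) (hcardle k)
  by_cases hjB : j ∈ B'
  · have hsplit : (S j ∩ I).card + ∑ k ∈ B'.erase j, (S k ∩ I).card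
        = ∑ k ∈ B', (S k ∩ I).card :=
      Finset.add_sum_erase B' (fun k => (S k ∩ I).card) hjB
    have h1 : (S j ∩ I).card ≤ p - 1 := by
      have := Finset.card_le_card (Finset.inter_subset_left : S j ∩ I ⊆ S j)
      omega
    have h2 : ∑ k ∈ B'.erase j, (S k ∩ I).card ≤ (B'.card - 1) * p := by
      calc ∑ k ∈ B'.erase j, (S k ∩ I).card ≤ ∑ _k ∈ B'.erase j, p :=
            Finset.sum_le_sum (fun k hk => hterm k (Finset.mem_of_mem_erase hk))
        _ = (B'.erase j).card * p := by simp [Finset.sum_const, mul_comm]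
        _ = (B'.card - 1) * p := by rw [Finset.card_erase_of_mem hjB]
    have hCc : C.card * p = B'.card * p := by
      rw [hC, Finset.insert_eq_self.mpr hjB]
    have hb1 : 1 ≤ B'.card := Finset.card_pos.mpr ⟨j, hjB⟩
    have hmul : (B'.card - 1) * p = B'.card * p - p := by
      rw [Nat.sub_mul, one_mul]
    have hple : p ≤ B'.card * p := Nat.le_mul_of_pos_left p (by omega)
    omega
  · have hsum : ∑ k ∈ B', (S k ∩ I).card ≤ B'.card * p := by
      calc ∑ k ∈ B', (S k ∩ I).card ≤ ∑ _k ∈ B', p := Finset.sum_le_sum hterm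
        _ = B'.card * p := by simp [Finset.sum_const, mul_comm]
    have hCc : C.card * p = B'.card * p + p := by
      rw [hC, Finset.card_insert_of_notMem hjB]; ring
    omega

end AuxStmt11

/-- Let `J` be a feasible set of jobs and `S` its earliest-deadline schedule.
Then every block of `S` (maximal interval `[s, t)` of consecutive busy time
units) satisfies: `s = r_i` for some job `i ∈ J` executed in the block; every
job executed within the block has release time at least `s`; and `t - s = a·p`
where `a` is the number of jobs executed within the block, each of which is
completed within the block. -/
theorem stmt11
    (n : ℕ) (r d w : Fin n → ℤ) (p : ℕ)
    (hp : 1 ≤ p) (hw : ∀ j, 0 ≤ w j) (hd : ∀ j, r j + (p : ℤ) ≤ d j) :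
    ∀ J : Finset (Fin n), Feasible n r d p J →
    ∀ S : Fin n → Finset ℤ, IsEDSchedule n r d p J S →
    ∀ s t : ℤ, s < t →
      (∀ u : ℤ, s ≤ u → u < t → ∃ j : Fin n, u ∈ S j) →
      (¬ ∃ j : Fin n, s - 1 ∈ S j) →
      (¬ ∃ j : Fin n, t ∈ S j) →
      ((∃ i ∈ J, s = r i ∧ ∃ u ∈ S i, s ≤ u ∧ u < t) ∧
       (∀ j : Fin n, (∃ u ∈ S j, s ≤ u ∧ u < t) → s ≤ r j) ∧
       (∃ B : Finset (Fin n),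
         (∀ j : Fin n, j ∈ B ↔ ∃ u ∈ S j, s ≤ u ∧ u < t) ∧
         t - s = (B.card : ℤ) * (p : ℤ) ∧
         ∀ j ∈ B, (S j).card = p ∧ ∀ u ∈ S j, s ≤ u ∧ u < t)) := by
  intro J hfeas S hed s t hst hbusy hidle1 hidle2
  classical
  have hcomplete := edf_complete hp hfeas hed
  have hmemJ : ∀ j : Fin n, ∀ u : ℤ, u ∈ S j → j ∈ J := by
    intro j u hu
    by_contra h
    rw [hed.2.1 j h] at hu
    exact absurd hu (Finset.notMem_empty u)
  have claim2 : ∀ j : Fin n, (∃ u ∈ S j, s ≤ u ∧ u < t) → s ≤ r j := by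
    rintro j ⟨u, hu, hsu, hut⟩
    by_contra h
    push_neg at h
    have hjJ := hmemJ j u hu
    have h1 : r j ≤ s - 1 := by omega
    have h2 : s - 1 < d j := by
      have := (hed.1.1 j u hu).2; omega
    have h3 : ((S j).filter (fun w => w < s - 1)).card < p :=
      lt_of_lt_of_le (filter_card_lt hu (by omega)) (hed.2.2.1 j)
    obtain ⟨k, _, hk, _⟩ := hed.2.2.2 (s - 1) j hjJ h1 h2 h3
    exact hidle1 ⟨k, hk⟩
  have hsub : ∀ j : Fin n, (∃ u ∈ S j, s ≤ u ∧ u < t) → ∀ v ∈ S j, s ≤ v ∧ v < t := by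
    intro j hjb v hv
    obtain ⟨u, hu, hsu, hut⟩ := hjb
    constructor
    · exact le_trans (claim2 j ⟨u, hu, hsu, hut⟩) (hed.1.1 j v hv).1
    · by_contra h
      push_neg at h
      have hjJ := hmemJ j u hu
      have h1 : r j ≤ t := by
        have := (hed.1.1 j u hu).1; omega
      have h2 : t < d j := lt_of_le_of_lt h (hed.1.1 j v hv).2
      have h3 : ((S j).filter (fun w => w < t)).card < p :=
        lt_of_lt_of_le (filter_card_lt hv (by omega)) (hed.2.2.1 j)
      obtain ⟨k, _, hk, _⟩ := hed.2.2.2 t j hjJ h1 h2 h3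
      exact hidle2 ⟨k, hk⟩
  obtain ⟨i, hi⟩ := hbusy s le_rfl hst
  have hib : ∃ u ∈ S i, s ≤ u ∧ u < t := ⟨s, hi, le_rfl, hst⟩
  have hiJ := hmemJ i s hi
  refine ⟨⟨i, hiJ, le_antisymm (claim2 i hib) ((hed.1.1 i s hi).1) |>.symm ▸ rfl, hib⟩,
    claim2, ?_⟩
  · set B : Finset (Fin n) :=
      Finset.univ.filter (fun j => ∃ u ∈ S j, s ≤ u ∧ u < t) with hB
    have hmemB : ∀ j, j ∈ B ↔ ∃ u ∈ S j, s ≤ u ∧ u < t := by intro j; simp [hB]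
    have hBsub : ∀ j ∈ B, (S j).card = p ∧ ∀ u ∈ S j, s ≤ u ∧ u < t := by
      intro j hjB
      obtain ⟨u, hu, h1, h2⟩ := (hmemB j).mp hjB
      exact ⟨hcomplete j (hmemJ j u hu), hsub j ⟨u, hu, h1, h2⟩⟩
    have hIeq : Finset.Ico s t = B.biUnion S := by
      ext v
      simp only [Finset.mem_biUnion, Finset.mem_Ico]
      constructor
      · rintro ⟨hv1, hv2⟩
        obtain ⟨j, hj⟩ := hbusy v hv1 hv2
        exact ⟨j, (hmemB j).mpr ⟨v, hj, hv1, hv2⟩, hj⟩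
      · rintro ⟨j, hjB, hv⟩
        exact (hBsub j hjB).2 v hv
    have hcount : (t - s).toNat = B.card * p := by
      calc (t - s).toNat = (Finset.Ico s t).card := (Int.card_Ico s t).symm
        _ = ∑ j ∈ B, (S j).card := by
            rw [hIeq]; exact Finset.card_biUnion (fun a _ b _ hab => hed.1.2 a b hab)
        _ = ∑ _j ∈ B, p := Finset.sum_congr rfl (fun j hj => (hBsub j hj).1)
        _ = B.card * p := by simp [Finset.sum_const, mul_comm]
    refine ⟨B, hmemB, ?_, hBsub⟩
    have h0 : (0 : ℤ) ≤ t - s := by omega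
    have := Int.toNat_of_nonneg h0
    rw [← this, hcount]
    push_cast
    ring
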